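/- If G is a three-dimensional real Lie algebra with G = [G,G], then for any nonzero element I of G, the centralizer of I in G is the one-dimensional span of I. -/

import Mathlib

/-- If `G` is a three-dimensional perfect real Lie algebra and `I ≠ 0`, then the centralizer
of `I` in `G` is exactly the span of `I`. -/
theorem perfect_dim3_centralizer_span (G : Type*) [LieRing G] [LieAlgebra ℝ G]
    [Module.Finite ℝ G] (hdim : Module.finrank ℝ G = 3)
    (hperf : LieAlgebra.derivedSeries ℝ G 1 = ⊤)
    (I : G) (hI : I ≠ 0) :
    ∀ X : G, ⁅X, I⁆ = 0 ↔ X ∈ Submodule.span ℝ ({I} : Set G) := by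
  intro X
  constructor
  · intro h
    by_contra hX
    -- `X` and `I` are linearly independent
    have hXI : LinearIndependent ℝ ![X, I] := by
      refine linearIndependent_fin2.mpr ⟨hI, fun a ha => hX ?_⟩
      rw [Submodule.mem_span_singleton]
      exact ⟨a, by simpa using ha⟩
    have hrange2 : Set.range ![X, I] = ({X, I} : Set G) := by
      ext x
      simp [Matrix.range_cons, Matrix.range_empty, Set.ext_iff]
      tauto
    -- find `K` outside the span of `{X, I}`
    obtain ⟨K, hK⟩ : ∃ K, K ∉ Submodule.span ℝ ({X, I} : Set G) := by
      by_contra hK'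
      push_neg at hK'
      have htop : Submodule.span ℝ ({X, I} : Set G) = ⊤ := Submodule.eq_top_iff'.mpr hK'
      have h2 : Module.finrank ℝ (Submodule.span ℝ ({X, I} : Set G)) ≤ 2 := by
        have h3 : Module.finrank ℝ (Submodule.span ℝ (Set.range ![X, I])) ≤ Fintype.card (Fin 2) :=
          finrank_range_le_card (R := ℝ) ![X, I]
        rw [hrange2, Fintype.card_fin] at h3
        exact h3
      rw [htop, finrank_top, hdim] at h2
      omega
    -- `X, I, K` are linearly independent, hence a basis
    have hXIK : LinearIndependent ℝ ![X, I, K] := by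
      have := linearIndependent_fin_snoc.mpr ⟨hXI, by rwa [hrange2]⟩
      rwa [show (Fin.snoc ![X, I] K : Fin 3 → G) = ![X, I, K] by
        ext i : 1; fin_cases i <;> rfl] at this
    have hrange3 : Set.range ![X, I, K] = ({X, I, K} : Set G) := by
      ext x
      simp [Matrix.range_cons, Matrix.range_empty, Set.ext_iff]
      tauto
    have htop : Submodule.span ℝ ({X, I, K} : Set G) = ⊤ := by
      apply Submodule.eq_top_of_finrank_eq
      rw [hdim, ← hrange3, finrank_span_eq_card hXIK]
      simp
    -- the derived algebra is contained in the span of two brackets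
    have hIX : ⁅I, X⁆ = 0 := by rw [← lie_skew, h, neg_zero]
    set D := Submodule.span ℝ ({⁅X, K⁆, ⁅I, K⁆} : Set G) with hD
    have hmem : ∀ a b : G, ⁅a, b⁆ ∈ D := by
      intro a b
      have ha : a ∈ Submodule.span ℝ ({X, I, K} : Set G) := htop ▸ Submodule.mem_top
      have hb : b ∈ Submodule.span ℝ ({X, I, K} : Set G) := htop ▸ Submodule.mem_top
      rw [Submodule.mem_span_insert] at ha hb
      obtain ⟨p, a', ha', rfl⟩ := ha
      obtain ⟨p', b', hb', rfl⟩ := hb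
      rw [Submodule.mem_span_insert] at ha' hb'
      obtain ⟨q, a'', ha'', rfl⟩ := ha'
      obtain ⟨q', b'', hb'', rfl⟩ := hb'
      rw [Submodule.mem_span_singleton] at ha'' hb''
      obtain ⟨r, rfl⟩ := ha''
      obtain ⟨r', rfl⟩ := hb''
      refine Submodule.mem_span_pair.mpr ⟨p * r' - r * p', q * r' - r * q', ?_⟩
      have hKX : ⁅K, X⁆ = -⁅X, K⁆ := by rw [← lie_skew]
      have hKI : ⁅K, I⁆ = -⁅I, K⁆ := by rw [← lie_skew]
      simp only [lie_add, add_lie, smul_lie, lie_smul, lie_self, smul_zero, h, hIX,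
        hKX, hKI, smul_neg, add_zero, zero_add, smul_smul]
      module
    have hDtop : D = ⊤ := by
      have h1 : (⁅(⊤ : LieIdeal ℝ G), (⊤ : LieIdeal ℝ G)⁆ : LieIdeal ℝ G) = ⊤ := by
        simpa [LieAlgebra.derivedSeries_def] using hperf
      have h2 : LieSubmodule.toSubmodule (⁅(⊤ : LieIdeal ℝ G), (⊤ : LieIdeal ℝ G)⁆ : LieIdeal ℝ G)
          ≤ D := by
        rw [LieSubmodule.lieIdeal_oper_eq_linear_span']
        rw [Submodule.span_le]
        rintro m ⟨a, -, b, -, rfl⟩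
        exact hmem a b
      rw [h1, LieSubmodule.top_toSubmodule] at h2
      exact le_antisymm le_top h2
    have hfin : Module.finrank ℝ D ≤ 2 := by
      have hrangeD : Set.range ![⁅X, K⁆, ⁅I, K⁆] = ({⁅X, K⁆, ⁅I, K⁆} : Set G) := by
        ext x
        simp [Matrix.range_cons, Matrix.range_empty, Set.ext_iff]
        tauto
      have h3 : Module.finrank ℝ (Submodule.span ℝ (Set.range ![⁅X, K⁆, ⁅I, K⁆]))
          ≤ Fintype.card (Fin 2) := finrank_range_le_card (R := ℝ) ![⁅X, K⁆, ⁅I, K⁆]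
      rw [hrangeD, Fintype.card_fin] at h3
      exact h3
    rw [hDtop, finrank_top, hdim] at hfin
    omega
  · intro hX
    obtain ⟨c, rfl⟩ := Submodule.mem_span_singleton.mp hX
    simp
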